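/- Let λ > 0, μ = 2/(2λ + L_f), δ > 0, and let x, x' ∈ ℝⁿ with x ≠ x'. Let η ∈ ∂h(x) and define the map S(z) = Prox_{μg}((1 − μλ)z − μ∇f(z) + μλx + μη). Then for any starting point z₀ ∈ ℝⁿ, the Picard iterates z_m = S(z_{m−1}) satisfy ‖z_m − z_{m−1}‖ ≤ δ‖x' − x‖ for all sufficiently large m; i.e., the inner loop of the cDCA terminates in a finite number of iterations whenever x ≠ x'. -/

import Mathlib

open Set Filter Topology
open scoped InnerProductSpace

noncomputable section

abbrev Euc (n : ℕ) := EuclideanSpace ℝ (Fin n)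

/-- The subdifferential of a real-valued function `h` at `u`. -/
def SubdiffR {n : ℕ} (h : Euc n → ℝ) (u : Euc n) : Set (Euc n) :=
  {ξ | ∀ z, h u + ⟪ξ, z - u⟫_ℝ ≤ h z}

/-- Convexity for extended-real-valued functions. -/
def ConvexEReal {n : ℕ} (g : Euc n → EReal) : Prop :=
  ∀ x y : Euc n, ∀ a b : ℝ, 0 ≤ a → 0 ≤ b → a + b = 1 →
    g (a • x + b • y) ≤ (a : EReal) * g x + (b : EReal) * g y

/-- `g` is proper: nowhere `⊥` and somewhere finite. -/
def ProperE {n : ℕ} (g : Euc n → EReal) : Prop :=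
  (∀ x, g x ≠ ⊥) ∧ ∃ x, g x ≠ ⊤

/-- `P` is the proximal mapping of `g`: for every `α > 0` and every `x`, `P α x` is
the unique minimizer over `ℝⁿ` of `y ↦ g y + (1/(2α)) ‖x - y‖²`. -/
def IsProx {n : ℕ} (g : Euc n → EReal) (P : ℝ → Euc n → Euc n) : Prop :=
  ∀ α : ℝ, 0 < α → ∀ x p, P α x = p ↔
    (∀ y, g p + ((1/(2*α) * ‖x - p‖^2 : ℝ) : EReal) ≤ g y + ((1/(2*α) * ‖x - y‖^2 : ℝ) : EReal))

/-- derivative of f along a line, from the gradient -/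
lemma hasDerivAt_line {n : ℕ} (f : Euc n → ℝ) (f' : Euc n → Euc n)
    (hfgrad : ∀ z, HasGradientAt f (f' z) z) (x d : Euc n) (t : ℝ) :
    HasDerivAt (fun s : ℝ => f (x + s • d)) ⟪f' (x + t • d), d⟫_ℝ t := by
  have hline : HasDerivAt (fun s : ℝ => x + s • d) d t := by
    simpa using (((hasDerivAt_id t).smul_const d).const_add x)
  have := ((hfgrad (x + t • d)).hasFDerivAt).comp_hasDerivAt t hline
  simp at this; exact this

/-- first-order convexity inequality -/
lemma grad_convex_ineq {n : ℕ} (f : Euc n → ℝ) (f' : Euc n → Euc n)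
    (hfconv : ConvexOn ℝ Set.univ f)
    (hfgrad : ∀ z, HasGradientAt f (f' z) z) (x w : Euc n) :
    f x + ⟪f' x, w - x⟫_ℝ ≤ f w := by
  set d := w - x with hd
  set φ : ℝ → ℝ := fun s => f (x + s • d) with hφ
  have hφconv : ConvexOn ℝ Set.univ φ := by
    refine ⟨convex_univ, fun p _ q _ a b ha hb hab => ?_⟩
    have hb1 : b = 1 - a := by linarith
    subst hb1
    have hpt : x + (a • p + (1-a) • q) • d = a • (x + p • d) + (1-a) • (x + q • d) := by
      simp only [smul_eq_mul]
      module
    rw [hφ]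
    simp only [smul_eq_mul] at hpt ⊢
    rw [hpt]
    exact hfconv.2 (mem_univ _) (mem_univ _) ha hb (by linarith)
  have hder : HasDerivAt φ ⟪f' x, d⟫_ℝ 0 := by
    have := hasDerivAt_line f f' hfgrad x d 0
    simpa using this
  have hslope := hφconv.le_slope_of_hasDerivAt (mem_univ (0:ℝ)) (mem_univ (1:ℝ))
    one_pos hder
  have : slope φ 0 1 = φ 1 - φ 0 := by simp [slope_def_field]
  rw [this] at hslope
  have h0 : φ 0 = f x := by simp [hφ]
  have h1 : φ 1 = f w := by simp [hφ, hd]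
  rw [h0, h1] at hslope
  linarith

/-- descent lemma -/
lemma descent_lemma {n : ℕ} (f : Euc n → ℝ) (f' : Euc n → Euc n) (Lf : ℝ) (hLf : 0 < Lf)
    (hfgrad : ∀ z, HasGradientAt f (f' z) z)
    (hflip : ∀ z w, ‖f' z - f' w‖ ≤ Lf * ‖z - w‖) (x y : Euc n) :
    f y ≤ f x + ⟪f' x, y - x⟫_ℝ + Lf/2 * ‖y - x‖^2 := by
  set d := y - x with hd
  set ψ : ℝ → ℝ := fun t => f (x + t • d) - t * ⟪f' x, d⟫_ℝ - t^2 * (Lf/2 * ‖d‖^2) with hψ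
  have hder : ∀ t : ℝ, HasDerivAt ψ
      (⟪f' (x + t • d), d⟫_ℝ - ⟪f' x, d⟫_ℝ - 2*t * (Lf/2 * ‖d‖^2)) t := by
    intro t
    have h1 := hasDerivAt_line f f' hfgrad x d t
    have h2 : HasDerivAt (fun s : ℝ => s * ⟪f' x, d⟫_ℝ) ⟪f' x, d⟫_ℝ t := by
      simpa using (hasDerivAt_id t).mul_const ⟪f' x, d⟫_ℝ
    have h3 : HasDerivAt (fun s : ℝ => s^2 * (Lf/2 * ‖d‖^2)) (2*t * (Lf/2 * ‖d‖^2)) t := by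
      simpa [mul_comm] using (hasDerivAt_pow 2 t).mul_const (Lf/2 * ‖d‖^2)
    exact (h1.sub h2).sub h3
  have hnonpos : ∀ t ∈ interior (Icc (0:ℝ) 1),
      deriv ψ t ≤ 0 := by
    intro t ht
    rw [interior_Icc] at ht
    rw [(hder t).deriv]
    have hcs : ⟪f' (x + t • d) - f' x, d⟫_ℝ ≤ ‖f' (x + t • d) - f' x‖ * ‖d‖ :=
      real_inner_le_norm _ _
    have hlip : ‖f' (x + t • d) - f' x‖ ≤ Lf * (t * ‖d‖) := by
      have := hflip (x + t • d) x
      simpa [norm_smul, abs_of_pos ht.1] using this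
    have hinner : ⟪f' (x + t • d) - f' x, d⟫_ℝ
        = ⟪f' (x + t • d), d⟫_ℝ - ⟪f' x, d⟫_ℝ := by
      rw [inner_sub_left]
    nlinarith [norm_nonneg d, ht.1.le]
  have hcont : ContinuousOn ψ (Icc 0 1) :=
    fun t _ => ((hder t).continuousAt).continuousWithinAt
  have hdiff : DifferentiableOn ℝ ψ (interior (Icc (0:ℝ) 1)) :=
    fun t _ => ((hder t).differentiableAt).differentiableWithinAt
  have hanti := antitoneOn_of_deriv_nonpos (convex_Icc (0:ℝ) 1) hcont hdiff hnonpos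
  have := hanti (left_mem_Icc.mpr zero_le_one) (right_mem_Icc.mpr zero_le_one) zero_le_one
  have h10 : f (x + (1:ℝ) • d) - 1 * ⟪f' x, d⟫_ℝ - 1^2 * (Lf/2 * ‖d‖^2)
      ≤ f (x + (0:ℝ) • d) - 0 * ⟪f' x, d⟫_ℝ - 0^2 * (Lf/2*‖d‖^2) := this
  rw [one_smul, zero_smul, add_zero] at h10
  have h1 : x + d = y := by rw [hd]; abel
  rw [h1] at h10
  nlinarith [h10]

/-- cocoercivity (Baillon–Haddad) -/
lemma cocoercive {n : ℕ} (f : Euc n → ℝ) (f' : Euc n → Euc n) (Lf : ℝ) (hLf : 0 < Lf)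
    (hfconv : ConvexOn ℝ Set.univ f)
    (hfgrad : ∀ z, HasGradientAt f (f' z) z)
    (hflip : ∀ z w, ‖f' z - f' w‖ ≤ Lf * ‖z - w‖) (z w : Euc n) :
    ‖f' z - f' w‖^2 / Lf ≤ ⟪f' z - f' w, z - w⟫_ℝ := by
  have key : ∀ a b : Euc n,
      f a + ⟪f' a, b - a⟫_ℝ + 1/(2*Lf) * ‖f' b - f' a‖^2 ≤ f b := by
    intro a b
    set e := f' b - f' a with he
    set b' := b - (1/Lf) • e with hb'
    have h1 := descent_lemma f f' Lf hLf hfgrad hflip b b'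
    have h2 := grad_convex_ineq f f' hfconv hfgrad a b'
    have hbb : b' - b = -((1/Lf) • e) := by rw [hb']; abel
    have hnorm : ‖b' - b‖^2 = (1/Lf)^2 * ‖e‖^2 := by
      rw [hbb, norm_neg, norm_smul]
      simp [abs_of_pos (by positivity : (0:ℝ) < 1/Lf), mul_pow]
    have hi1 : ⟪f' b, b' - b⟫_ℝ = -((1/Lf) * ⟪f' b, e⟫_ℝ) := by
      rw [hbb, inner_neg_right, real_inner_smul_right]
    have hi2 : ⟪f' a, b' - a⟫_ℝ = ⟪f' a, b - a⟫_ℝ - (1/Lf) * ⟪f' a, e⟫_ℝ := by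
      have : b' - a = (b - a) - (1/Lf) • e := by rw [hb']; abel
      rw [this, inner_sub_right, real_inner_smul_right]
    have hee : ⟪f' b, e⟫_ℝ - ⟪f' a, e⟫_ℝ = ‖e‖^2 := by
      rw [← inner_sub_left, ← he, real_inner_self_eq_norm_sq]
    rw [hnorm, hi1] at h1
    rw [hi2] at h2
    have hL : Lf/2 * ((1/Lf)^2 * ‖e‖^2) = 1/(2*Lf) * ‖e‖^2 := by
      field_simp
    have hee' : (1/Lf) * ⟪f' b, e⟫_ℝ - (1/Lf) * ⟪f' a, e⟫_ℝ = (1/Lf) * ‖e‖^2 := by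
      rw [← mul_sub, hee]
    have hfrac : (1/Lf) * ‖e‖^2 = 2 * (1/(2*Lf) * ‖e‖^2) := by field_simp
    linarith [h1, h2, hee', hL, hfrac]
  have k1 := key w z
  have k2 := key z w
  rw [show ‖f' w - f' z‖ = ‖f' z - f' w‖ from norm_sub_rev _ _] at k2
  have hsum : ⟪f' w, z - w⟫_ℝ + ⟪f' z, w - z⟫_ℝ + 2 * (1/(2*Lf) * ‖f' z - f' w‖^2) ≤ 0 := by
    linarith
  have hexp : ⟪f' z - f' w, z - w⟫_ℝ = -(⟪f' w, z - w⟫_ℝ + ⟪f' z, w - z⟫_ℝ) := by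
    have h1 : (w : Euc n) - z = -(z - w) := by abel
    rw [inner_sub_left, h1, inner_neg_right]
    ring
  rw [hexp]
  have : 2 * (1/(2*Lf) * ‖f' z - f' w‖^2) = ‖f' z - f' w‖^2 / Lf := by
    field_simp
  linarith [hsum, this.symm.le]

/-- the prox inner-product inequality -/
lemma prox_inner_le {n : ℕ} {g : Euc n → EReal} {P : ℝ → Euc n → Euc n}
    (hgconv : ConvexEReal g) (hP : IsProx g P)
    {α : ℝ} (hα : 0 < α) (u : Euc n) {y : Euc n} {gp gy : ℝ}
    (hgp : g (P α u) = (gp : EReal)) (hgy : g y = (gy : EReal)) :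
    ⟪u - P α u, y - P α u⟫_ℝ ≤ α * (gy - gp) := by
  set p := P α u with hp
  have hmin := (hP α hα u p).mp rfl
  set c := 1/(2*α) with hc
  have hcpos : 0 < c := by rw [hc]; positivity
  set d := y - p with hd
  have key : ∀ t : ℝ, 0 < t → t ≤ 1 →
      2*c*⟪u - p, d⟫_ℝ ≤ gy - gp + t*(c*‖d‖^2) := by
    intro t ht0 ht1
    have hyt : (1-t) • p + t • y = p + t • d := by rw [hd]; module
    have hconv := hgconv p y (1-t) t (by linarith) ht0.le (by ring)
    rw [hyt, hgp, hgy] at hconv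
    have hconv' : g (p + t • d) ≤ (((1-t)*gp + t*gy : ℝ) : EReal) := by
      rw [EReal.coe_add, EReal.coe_mul, EReal.coe_mul]; exact hconv
    have hmin' := hmin (p + t • d)
    rw [hgp] at hmin'
    have hchain : ((gp + c*‖u-p‖^2 : ℝ) : EReal)
        ≤ (((1-t)*gp + t*gy + c*‖u-(p+t•d)‖^2 : ℝ) : EReal) := by
      rw [EReal.coe_add, EReal.coe_add]
      exact le_trans hmin' (add_le_add_left hconv' _)
    have hreal := EReal.coe_le_coe_iff.mp hchain
    have hexp : ‖u - (p + t•d)‖^2 = ‖u-p‖^2 - 2*(t*⟪u-p,d⟫_ℝ) + t^2*‖d‖^2 := by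
      have h0 : u - (p + t•d) = (u - p) - t•d := by abel
      rw [h0, @norm_sub_sq_real, real_inner_smul_right, norm_smul]
      simp [abs_of_pos ht0, mul_pow]
      try ring
    rw [hexp] at hreal
    have ht' : 0 ≤ gy - gp - 2*c*⟪u-p,d⟫_ℝ + t*(c*‖d‖^2) := by nlinarith [hreal]
    linarith
  have hA : 2*c*⟪u - p, d⟫_ℝ ≤ gy - gp := by
    by_contra hcon
    push_neg at hcon
    set A := 2*c*⟪u - p, d⟫_ℝ - (gy - gp) with hA
    have hApos : 0 < A := by rw [hA]; linarith
    set t := min 1 (A/(2*(c*‖d‖^2 + 1))) with ht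
    have hden : 0 < c*‖d‖^2 + 1 := by positivity
    have ht0 : 0 < t := lt_min one_pos (by positivity)
    have := key t ht0 (min_le_left _ _)
    have htb : t * (c*‖d‖^2) < A := by
      have h1 : t ≤ A/(2*(c*‖d‖^2+1)) := min_le_right _ _
      have h2 : (0:ℝ) ≤ c*‖d‖^2 := by positivity
      have h3 : t * (c*‖d‖^2) ≤ (A/(2*(c*‖d‖^2+1))) * (c*‖d‖^2+1) := by
        have := mul_le_mul h1 (by linarith : c*‖d‖^2 ≤ c*‖d‖^2+1) h2 (by positivity)
        linarith [this]
      have h4 : (A/(2*(c*‖d‖^2+1))) * (c*‖d‖^2+1) = A/2 := by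
        field_simp
      rw [h4] at h3
      linarith
    rw [hA] at htb
    linarith
  have h2c : 2*c = 1/α := by rw [hc]; field_simp
  rw [h2c] at hA
  have := mul_le_mul_of_nonneg_left hA hα.le
  have heq : α * (1/α * ⟪u - p, d⟫_ℝ) = ⟪u - p, d⟫_ℝ := by
    field_simp
  rw [heq] at this
  exact this

/-- prox value is finite -/
lemma prox_finite {n : ℕ} {g : Euc n → EReal} {P : ℝ → Euc n → Euc n}
    (hgproper : ProperE g) (hP : IsProx g P) {α : ℝ} (hα : 0 < α) (u : Euc n) :
    ∃ r : ℝ, g (P α u) = (r : EReal) := by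
  obtain ⟨y₀, hy₀⟩ := hgproper.2
  have hmin := (hP α hα u (P α u)).mp rfl y₀
  have htop : g (P α u) ≠ ⊤ := by
    intro htop
    rw [htop, EReal.top_add_coe] at hmin
    rw [top_le_iff] at hmin
    have : g y₀ = ⊤ := by
      by_contra hne
      have hb := hgproper.1 y₀
      rw [← EReal.coe_toReal hne hb, ← EReal.coe_add] at hmin
      exact (EReal.coe_ne_top _) hmin
    exact hy₀ this
  exact ⟨(g (P α u)).toReal, (EReal.coe_toReal htop (hgproper.1 _)).symm⟩

/-- prox is nonexpansive -/
lemma prox_nonexpansive {n : ℕ} {g : Euc n → EReal} {P : ℝ → Euc n → Euc n}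
    (hgproper : ProperE g) (hgconv : ConvexEReal g) (hP : IsProx g P)
    {α : ℝ} (hα : 0 < α) (u v : Euc n) :
    ‖P α u - P α v‖ ≤ ‖u - v‖ := by
  obtain ⟨gp, hgp⟩ := prox_finite hgproper hP hα u
  obtain ⟨gq, hgq⟩ := prox_finite hgproper hP hα v
  have I1 := prox_inner_le hgconv hP hα u hgp hgq
  have I2 := prox_inner_le hgconv hP hα v hgq hgp
  set p := P α u
  set q := P α v
  have hkey : ‖p - q‖^2 ≤ ⟪u - v, p - q⟫_ℝ := by
    have e1 : ⟪u - p, q - p⟫_ℝ + ⟪v - q, p - q⟫_ℝ ≤ 0 := by linarith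
    have e2 : ⟪u - p, q - p⟫_ℝ + ⟪v - q, p - q⟫_ℝ
        = ‖p - q‖^2 - ⟪u - v, p - q⟫_ℝ := by
      have hqp : (q : Euc n) - p = -(p - q) := by abel
      rw [hqp, inner_neg_right, inner_sub_left, inner_sub_left, inner_sub_left]
      have h1 : ⟪p - q, p - q⟫_ℝ = ‖p - q‖^2 := real_inner_self_eq_norm_sq _
      have h2 : ⟪p, p - q⟫_ℝ - ⟪q, p - q⟫_ℝ = ‖p-q‖^2 := by
        rw [← inner_sub_left]; exact real_inner_self_eq_norm_sq _
      linarith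
    linarith
  have hcs : ⟪u - v, p - q⟫_ℝ ≤ ‖u - v‖ * ‖p - q‖ := real_inner_le_norm _ _
  rcases eq_or_lt_of_le (norm_nonneg (p - q)) with h0 | h0
  · rw [← h0]; exact norm_nonneg _
  · nlinarith


/-- With `λ > 0`, `μ = 2/(2λ + L_f)`, `δ > 0`, `x ≠ x'`, `η ∈ ∂h(x)` and
`S(z) = Prox_{μg}((1-μλ)z - μ∇f(z) + μλx + μη)`, the Picard iterates `z_m = S(z_{m-1})`
starting from any `z₀` satisfy `‖z_m - z_{m-1}‖ ≤ δ‖x' - x‖` for all sufficiently large `m`. -/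
theorem stmt3 {n : ℕ}
    (f : Euc n → ℝ) (f' : Euc n → Euc n) (Lf : ℝ) (hLf : 0 < Lf)
    (hfconv : ConvexOn ℝ Set.univ f)
    (hfgrad : ∀ z, HasGradientAt f (f' z) z)
    (hflip : ∀ z w, ‖f' z - f' w‖ ≤ Lf * ‖z - w‖)
    (g : Euc n → EReal) (hgproper : ProperE g) (hgconv : ConvexEReal g)
    (hglsc : LowerSemicontinuous g)
    (h : Euc n → ℝ) (hhconv : ConvexOn ℝ Set.univ h)
    (P : ℝ → Euc n → Euc n) (hP : IsProx g P)
    (lam mu δ : ℝ) (hlam : 0 < lam) (hmu : mu = 2/(2*lam + Lf)) (hδ : 0 < δ)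
    (x x' : Euc n) (hxx : x ≠ x') (η : Euc n) (hη : η ∈ SubdiffR h x)
    (z : ℕ → Euc n)
    (hz : ∀ m : ℕ, z (m+1) = P mu ((1 - mu*lam) • z m - mu • f' (z m) + (mu*lam) • x + mu • η)) :
    ∃ N : ℕ, ∀ m ≥ N, ‖z (m+1) - z m‖ ≤ δ * ‖x' - x‖ := by
  have hden : 0 < 2*lam + Lf := by linarith
  set q := Lf/(2*lam+Lf) with hqdef
  have hq0 : 0 ≤ q := by positivity
  have hq1 : q < 1 := by rw [hqdef, div_lt_one hden]; linarith
  have hmupos : 0 < mu := by rw [hmu]; positivity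
  have hqeq : 1 - mu*lam = q := by rw [hmu, hqdef]; field_simp; ring
  have hmuL : mu * Lf = 2*q := by rw [hmu, hqdef]; field_simp
  have hcontr : ∀ w1 w2 : Euc n,
      ‖P mu ((1 - mu*lam) • w1 - mu • f' w1 + (mu*lam) • x + mu • η)
        - P mu ((1 - mu*lam) • w2 - mu • f' w2 + (mu*lam) • x + mu • η)‖
        ≤ q * ‖w1 - w2‖ := by
    intro w1 w2
    set u := (1 - mu*lam) • w1 - mu • f' w1 + (mu*lam) • x + mu • η with hu
    set v := (1 - mu*lam) • w2 - mu • f' w2 + (mu*lam) • x + mu • η with hv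
    have hne := prox_nonexpansive hgproper hgconv hP hmupos u v
    set dd := w1 - w2 with hdd
    set e := f' w1 - f' w2 with he
    have hudiff : u - v = (1 - mu*lam) • dd - mu • e := by
      rw [hu, hv, hdd, he]; module
    have hco := cocoercive f f' Lf hLf hfconv hfgrad hflip w1 w2
    rw [← he, ← hdd] at hco
    have hnormsq : ‖(1 - mu*lam) • dd - mu • e‖^2
        = (1 - mu*lam)^2 * ‖dd‖^2 - 2*((1 - mu*lam)*(mu*⟪dd, e⟫_ℝ)) + mu^2*‖e‖^2 := by
      rw [@norm_sub_sq_real, real_inner_smul_left, real_inner_smul_right,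
        norm_smul, norm_smul]
      rw [Real.norm_eq_abs, Real.norm_eq_abs, mul_pow, mul_pow, sq_abs, sq_abs]
    have hstep : mu^2 * ‖e‖^2 ≤ 2*q*mu*⟪e, dd⟫_ℝ := by
      have hmul := mul_le_mul_of_nonneg_left hco (show (0:ℝ) ≤ 2*q*mu by positivity)
      have hco2 : 2*q*mu*(‖e‖^2/Lf) = mu^2*‖e‖^2 := by
        rw [← hmuL]; field_simp
      linarith
    have hfinal : ‖u - v‖^2 ≤ (q*‖dd‖)^2 := by
      rw [hudiff, hnormsq, hqeq]
      have hcomm : ⟪dd, e⟫_ℝ = ⟪e, dd⟫_ℝ := real_inner_comm _ _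
      rw [hcomm]
      nlinarith [hstep]
    have hle : ‖u - v‖ ≤ q*‖dd‖ := by
      nlinarith [hfinal, norm_nonneg (u - v), mul_nonneg hq0 (norm_nonneg dd)]
    exact le_trans hne hle
  have hstep : ∀ m : ℕ, ‖z (m+2) - z (m+1)‖ ≤ q * ‖z (m+1) - z m‖ := by
    intro m
    have := hcontr (z (m+1)) (z m)
    rw [← hz (m+1), ← hz m] at this
    exact this
  have hgeo : ∀ m : ℕ, ‖z (m+1) - z m‖ ≤ q^m * ‖z 1 - z 0‖ := by
    intro m
    induction m with
    | zero => simp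
    | succ k ih =>
      calc ‖z (k+2) - z (k+1)‖ ≤ q * ‖z (k+1) - z k‖ := hstep k
        _ ≤ q * (q^k * ‖z 1 - z 0‖) := by
            exact mul_le_mul_of_nonneg_left ih hq0
        _ = q^(k+1) * ‖z 1 - z 0‖ := by ring
  have hεpos : 0 < δ * ‖x' - x‖ :=
    mul_pos hδ (by rw [norm_sub_pos_iff]; exact Ne.symm hxx)
  have htend : Tendsto (fun m : ℕ => q^m * ‖z 1 - z 0‖) atTop (𝓝 0) := by
    have := (tendsto_pow_atTop_nhds_zero_of_lt_one hq0 hq1).mul_const ‖z 1 - z 0‖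
    simpa using this
  obtain ⟨N, hN⟩ := eventually_atTop.mp (htend.eventually_lt_const hεpos)
  exact ⟨N, fun m hm => le_trans (hgeo m) (le_of_lt (hN m hm))⟩
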